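/- There exist universal constants n₀ and c such that for every ε > 0 and n > n₀, setting k = log(n/ε²) + log log(n/ε²) + c, there exists a function F : F_2^n → F_2 such that for every affine subspace U ⊆ F_2^n of dimension k and every nonzero a ∈ F_2^n, |(1/2^k)·Σ_{x∈U} (−1)^{F(x)+F(x+a)}| ≤ ε. -/

import Mathlib

open Finset Real
open scoped Classical
set_option maxHeartbeats 1600000


noncomputable def chi (v : ZMod 2) : ℝ := if v = 0 then 1 else -1

lemma chi_sum_exp (c : ℝ) : ∑ v : ZMod 2, Real.exp (c * chi v) = Real.exp c + Real.exp (-c) := by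
  rw [show (Finset.univ : Finset (ZMod 2)) = {0, 1} by decide]
  rw [Finset.sum_insert (by decide), Finset.sum_singleton]
  simp [chi, mul_comm]

lemma mgf_eq (α : Type*) [Fintype α] [DecidableEq α] (c : ℝ) :
    ∑ s : α → ZMod 2, Real.exp (c * ∑ x, chi (s x)) =
      (Real.exp c + Real.exp (-c)) ^ (Fintype.card α) := by
  classical
  have : ∀ s : α → ZMod 2, Real.exp (c * ∑ x, chi (s x)) = ∏ x, Real.exp (c * chi (s x)) := by
    intro s
    rw [Finset.mul_sum, Real.exp_sum]
  simp_rw [this]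
  rw [← Fintype.prod_sum fun (_ : α) (v : ZMod 2) => Real.exp (c * chi v)]
  simp_rw [chi_sum_exp]
  rw [Finset.prod_const, Finset.card_univ]

lemma count_one_side (α : Type*) [Fintype α] [DecidableEq α] (t : ℝ) (ht : 0 < t) :
    ((Finset.univ.filter fun s : α → ZMod 2 => t ≤ ∑ x, chi (s x)).card : ℝ) ≤
      2 ^ (Fintype.card α) * Real.exp (-(t ^ 2) / (2 * Fintype.card α)) := by
  classical
  set m := Fintype.card α with hm
  rcases Nat.eq_zero_or_pos m with h0 | hpos
  · have he : (Finset.univ.filter fun s : α → ZMod 2 => t ≤ ∑ x, chi (s x)) = ∅ := by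
      apply Finset.filter_false_of_mem
      intro s _
      have : (Finset.univ : Finset α) = ∅ := Finset.univ_eq_empty_iff.2 (Fintype.card_eq_zero_iff.mp h0)
      rw [this]
      simpa using ht
    rw [he]
    simp
    positivity
  set c : ℝ := t / m with hc
  have hcpos : 0 < c := div_pos ht (by exact_mod_cast hpos)
  have key : ((Finset.univ.filter fun s : α → ZMod 2 => t ≤ ∑ x, chi (s x)).card : ℝ) * Real.exp (c * t)
      ≤ (Real.exp c + Real.exp (-c)) ^ m := by
    rw [← mgf_eq]
    calc ((Finset.univ.filter fun s : α → ZMod 2 => t ≤ ∑ x, chi (s x)).card : ℝ) * Real.exp (c * t)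
        = ∑ _s ∈ Finset.univ.filter fun s : α → ZMod 2 => t ≤ ∑ x, chi (s x), Real.exp (c * t) := by
          rw [Finset.sum_const, nsmul_eq_mul]
      _ ≤ ∑ s ∈ Finset.univ.filter fun s : α → ZMod 2 => t ≤ ∑ x, chi (s x),
            Real.exp (c * ∑ x, chi (s x)) := by
          apply Finset.sum_le_sum
          intro s hs
          rw [Finset.mem_filter] at hs
          exact Real.exp_le_exp.2 (by nlinarith [hs.2])
      _ ≤ ∑ s : α → ZMod 2, Real.exp (c * ∑ x, chi (s x)) := by
          apply Finset.sum_le_sum_of_subset_of_nonneg (Finset.filter_subset _ _)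
          intro s _ _
          positivity
  have hbound : (Real.exp c + Real.exp (-c)) ^ m ≤ (2 * Real.exp (c ^ 2 / 2)) ^ m := by
    apply pow_le_pow_left₀ (by positivity)
    have := Real.cosh_le_exp_half_sq c
    rw [Real.cosh_eq] at this
    linarith
  have hexp : (2 * Real.exp (c ^ 2 / 2)) ^ m = 2 ^ m * Real.exp (m * (c ^ 2 / 2)) := by
    rw [mul_pow, ← Real.exp_nat_mul]
  have harith : (m : ℝ) * (c ^ 2 / 2) - c * t = -(t ^ 2) / (2 * m) := by
    have hmne : (m : ℝ) ≠ 0 := by exact_mod_cast hpos.ne'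
    rw [hc]
    field_simp
    ring
  have hepos : 0 < Real.exp (c * t) := Real.exp_pos _
  have hfin : ((Finset.univ.filter fun s : α → ZMod 2 => t ≤ ∑ x, chi (s x)).card : ℝ) ≤
      2 ^ m * Real.exp ((m : ℝ) * (c ^ 2 / 2)) / Real.exp (c * t) := by
    rw [le_div_iff₀ hepos]
    calc _ ≤ (Real.exp c + Real.exp (-c)) ^ m := key
      _ ≤ (2 * Real.exp (c ^ 2 / 2)) ^ m := hbound
      _ = _ := hexp
  calc _ ≤ 2 ^ m * Real.exp ((m : ℝ) * (c ^ 2 / 2)) / Real.exp (c * t) := hfin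
    _ = 2 ^ m * Real.exp ((m : ℝ) * (c ^ 2 / 2) - c * t) := by
        rw [Real.exp_sub]; ring
    _ = 2 ^ m * Real.exp (-(t ^ 2) / (2 * m)) := by rw [harith]




lemma chi_add_one (v : ZMod 2) : chi (v + 1) = -chi v := by
  have h : ∀ w : ZMod 2, w = 0 ∨ w = 1 := by decide
  rcases h v with rfl | rfl
  · norm_num [chi, show (0 + 1 : ZMod 2) = 1 from by decide, show (1 : ZMod 2) ≠ 0 from by decide]
  · rw [show (1 + 1 : ZMod 2) = 0 from by decide]
    norm_num [chi, show (1 : ZMod 2) ≠ 0 from by decide]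

lemma count_two_side (α : Type*) [Fintype α] [DecidableEq α] (t : ℝ) (ht : 0 < t) :
    ((Finset.univ.filter fun s : α → ZMod 2 => t ≤ |∑ x, chi (s x)|).card : ℝ) ≤
      2 ^ (Fintype.card α + 1) * Real.exp (-(t ^ 2) / (2 * Fintype.card α)) := by
  have hsub : (Finset.univ.filter fun s : α → ZMod 2 => t ≤ |∑ x, chi (s x)|) ⊆
      (Finset.univ.filter fun s : α → ZMod 2 => t ≤ ∑ x, chi (s x)) ∪
      (Finset.univ.filter fun s : α → ZMod 2 => t ≤ -∑ x, chi (s x)) := by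
    intro s hs
    rw [Finset.mem_filter, le_abs] at hs
    rcases hs.2 with h | h
    · exact Finset.mem_union_left _ (Finset.mem_filter.2 ⟨Finset.mem_univ _, h⟩)
    · exact Finset.mem_union_right _ (Finset.mem_filter.2 ⟨Finset.mem_univ _, h⟩)
  have hcard2 : (Finset.univ.filter fun s : α → ZMod 2 => t ≤ -∑ x, chi (s x)).card =
      (Finset.univ.filter fun s : α → ZMod 2 => t ≤ ∑ x, chi (s x)).card := by
    refine Finset.card_bij' (fun s _ => fun x => s x + 1) (fun s _ => fun x => s x + 1)
      ?_ ?_ ?_ ?_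
    · intro s hs
      rw [Finset.mem_filter] at hs ⊢
      refine ⟨Finset.mem_univ _, ?_⟩
      have : ∑ x, chi (s x + 1) = -∑ x, chi (s x) := by
        rw [← Finset.sum_neg_distrib]
        exact Finset.sum_congr rfl fun x _ => chi_add_one (s x)
      rw [this]
      exact hs.2
    · intro s hs
      rw [Finset.mem_filter] at hs ⊢
      refine ⟨Finset.mem_univ _, ?_⟩
      have : ∑ x, chi (s x + 1) = -∑ x, chi (s x) := by
        rw [← Finset.sum_neg_distrib]
        exact Finset.sum_congr rfl fun x _ => chi_add_one (s x)
      rw [this]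
      linarith [hs.2]
    · intro s _; funext x
      simp [show (1 + 1 : ZMod 2) = 0 by decide, add_assoc]
    · intro s _; funext x
      simp [show (1 + 1 : ZMod 2) = 0 by decide, add_assoc]
  calc ((Finset.univ.filter fun s : α → ZMod 2 => t ≤ |∑ x, chi (s x)|).card : ℝ)
      ≤ ((Finset.univ.filter fun s : α → ZMod 2 => t ≤ ∑ x, chi (s x)) ∪
         (Finset.univ.filter fun s : α → ZMod 2 => t ≤ -∑ x, chi (s x))).card := by
        exact_mod_cast Nat.cast_le.2 (Finset.card_le_card hsub)
    _ ≤ ((Finset.univ.filter fun s : α → ZMod 2 => t ≤ ∑ x, chi (s x)).card : ℝ) +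
        ((Finset.univ.filter fun s : α → ZMod 2 => t ≤ -∑ x, chi (s x)).card : ℝ) := by
        exact_mod_cast Nat.cast_le.2 (Finset.card_union_le _ _)
    _ = 2 * ((Finset.univ.filter fun s : α → ZMod 2 => t ≤ ∑ x, chi (s x)).card : ℝ) := by
        rw [hcard2]; ring
    _ ≤ 2 * (2 ^ (Fintype.card α) * Real.exp (-(t ^ 2) / (2 * Fintype.card α))) := by
        have := count_one_side α t ht
        linarith
    _ = 2 ^ (Fintype.card α + 1) * Real.exp (-(t ^ 2) / (2 * Fintype.card α)) := by
        rw [pow_succ]; ring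

lemma card_fiber {A B : Type*} [AddCommGroup A] [AddCommGroup B] [Fintype A] [Fintype B]
    [DecidableEq B] (f : A →+ B) (hf : Function.Surjective f) (s : B) :
    (Finset.univ.filter fun F => f F = s).card * Fintype.card B = Fintype.card A := by
  classical
  have h1 : ∀ y : B, (Finset.univ.filter fun F => f F = y).card =
      (Finset.univ.filter fun F => f F = s).card := fun y =>
    AddMonoidHom.card_fiber_eq_of_mem_range f (hf y) (hf s)
  have h2 : Fintype.card A = ∑ y : B, (Finset.univ.filter fun F => f F = y).card := by
    rw [← Finset.card_univ (α := A)]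
    exact Finset.card_eq_sum_card_fiberwise fun x _ => Finset.mem_univ (f x)
  rw [h2, Finset.sum_congr rfl fun y _ => h1 y, Finset.sum_const, Finset.card_univ,
    smul_eq_mul, mul_comm]

lemma count_via_map {A β : Type*} [AddCommGroup A] [Fintype A] [DecidableEq A]
    [Fintype β] [DecidableEq β] (Φ : A →+ (β → ZMod 2)) (hΦ : Function.Surjective Φ)
    (t : ℝ) (ht : 0 < t) :
    ((Finset.univ.filter fun F : A => t ≤ |∑ x : β, chi (Φ F x)|).card : ℝ) ≤
      (Fintype.card A) * 2 * Real.exp (-(t ^ 2) / (2 * Fintype.card β)) := by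
  classical
  set badS := Finset.univ.filter fun s : β → ZMod 2 => t ≤ |∑ x, chi (s x)| with hbadS
  set bad := Finset.univ.filter fun F : A => t ≤ |∑ x : β, chi (Φ F x)| with hbad
  have h1 : bad.card = ∑ s ∈ badS, (bad.filter fun F => Φ F = s).card := by
    apply Finset.card_eq_sum_card_fiberwise
    intro F hF
    rw [Finset.mem_coe] at hF ⊢
    rw [hbad, Finset.mem_filter] at hF
    exact Finset.mem_filter.2 ⟨Finset.mem_univ _, hF.2⟩
  have hcB : Fintype.card (β → ZMod 2) = 2 ^ Fintype.card β := by
    simp [Fintype.card_fun]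
  have h2 : ∀ s, ((bad.filter fun F => Φ F = s).card : ℝ) ≤
      (Fintype.card A : ℝ) / 2 ^ Fintype.card β := by
    intro s
    have hle : (bad.filter fun F => Φ F = s).card ≤
        (Finset.univ.filter fun F : A => Φ F = s).card :=
      Finset.card_le_card (fun F hF => by
        rw [Finset.mem_filter] at hF ⊢
        exact ⟨Finset.mem_univ _, hF.2⟩)
    have heq := card_fiber Φ hΦ s
    rw [hcB] at heq
    rw [le_div_iff₀ (by positivity)]
    calc ((bad.filter fun F => Φ F = s).card : ℝ) * 2 ^ Fintype.card β
        ≤ ((Finset.univ.filter fun F : A => Φ F = s).card : ℝ) * 2 ^ Fintype.card β := by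
          have := Nat.cast_le (α := ℝ).2 hle
          have h2pos : (0:ℝ) < 2 ^ Fintype.card β := by positivity
          exact mul_le_mul_of_nonneg_right (by exact_mod_cast hle) (le_of_lt h2pos)
      _ = (Fintype.card A : ℝ) := by exact_mod_cast heq
  have h3 : ((badS.card : ℝ)) ≤ 2 ^ (Fintype.card β + 1) *
      Real.exp (-(t ^ 2) / (2 * Fintype.card β)) := count_two_side β t ht
  calc (bad.card : ℝ) = ∑ s ∈ badS, ((bad.filter fun F => Φ F = s).card : ℝ) := by
        rw [h1]; push_cast; ring
    _ ≤ ∑ _s ∈ badS, (Fintype.card A : ℝ) / 2 ^ Fintype.card β :=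
        Finset.sum_le_sum fun s _ => h2 s
    _ = (badS.card : ℝ) * ((Fintype.card A : ℝ) / 2 ^ Fintype.card β) := by
        rw [Finset.sum_const, nsmul_eq_mul]
    _ ≤ (2 ^ (Fintype.card β + 1) * Real.exp (-(t ^ 2) / (2 * Fintype.card β))) *
        ((Fintype.card A : ℝ) / 2 ^ Fintype.card β) := by
        apply mul_le_mul_of_nonneg_right h3
        positivity
    _ = (Fintype.card A) * 2 * Real.exp (-(t ^ 2) / (2 * Fintype.card β)) := by
        rw [pow_succ]
        field_simp




lemma zmod2_neg (v : ZMod 2) : -v = v := by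
  have : ∀ w : ZMod 2, -w = w := by decide
  exact this v

lemma pi_neg_self {n : ℕ} (a : Fin n → ZMod 2) : -a = a := by
  funext j; exact zmod2_neg (a j)

lemma pi_add_self {n : ℕ} (a : Fin n → ZMod 2) : a + a = 0 := by
  funext j; have : ∀ v : ZMod 2, v + v = 0 := by decide
  exact this (a j)

lemma card_coset (n k : ℕ) (V : Submodule (ZMod 2) (Fin n → ZMod 2)) [DecidablePred (· ∈ V)]
    (x0 : Fin n → ZMod 2) (hk : Module.finrank (ZMod 2) V = k) :
    (Finset.univ.filter fun x => x - x0 ∈ V).card = 2 ^ k := by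
  have e : V ≃ {x : Fin n → ZMod 2 // x - x0 ∈ V} :=
    { toFun := fun v => ⟨(v : Fin n → ZMod 2) + x0, by simp⟩
      invFun := fun x => ⟨(x : Fin n → ZMod 2) - x0, x.2⟩
      left_inv := fun v => by ext1; simp
      right_inv := fun x => by ext1; simp }
  have h1 : Fintype.card V = 2 ^ k := by
    rw [Module.card_eq_pow_finrank (K := ZMod 2) (V := V), ZMod.card, hk]
  rw [← Fintype.card_subtype, ← Fintype.card_congr e, h1]

/-- the derivative map `F ↦ (x ↦ F x + F (x+a))` restricted to a finset, as an AddMonoidHom. -/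
def dirMap (n : ℕ) (a : Fin n → ZMod 2) (T : Finset (Fin n → ZMod 2)) :
    ((Fin n → ZMod 2) → ZMod 2) →+ (↥T → ZMod 2) where
  toFun F := fun x => F x + F ((x : Fin n → ZMod 2) + a)
  map_zero' := by funext x; simp
  map_add' F G := by funext x; simp [Pi.add_apply]; abel

lemma per_triple (n k : ℕ) (ε : ℝ) (hε : 0 < ε) (V : Submodule (ZMod 2) (Fin n → ZMod 2))
    (x0 a : Fin n → ZMod 2) (hk : Module.finrank (ZMod 2) V = k) (ha : a ≠ 0) :
    ((Finset.univ.filter fun F : (Fin n → ZMod 2) → ZMod 2 =>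
        ε * 2 ^ k ≤ |∑ x ∈ Finset.univ.filter (fun x => x - x0 ∈ V),
          chi (F x + F (x + a))|).card : ℝ)
      ≤ 2 ^ (2 ^ n) * 2 * Real.exp (-(ε ^ 2 * 2 ^ k) / 8) := by
  classical
  set U := Finset.univ.filter (fun x : Fin n → ZMod 2 => x - x0 ∈ V) with hU
  have hcardU : U.card = 2 ^ k := card_coset n k V x0 hk
  have hcardA : Fintype.card ((Fin n → ZMod 2) → ZMod 2) = 2 ^ (2 ^ n) := by
    rw [Fintype.card_fun]
    congr 1 <;> simp [ZMod.card]
  by_cases haV : a ∈ V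
  · -- a ∈ V : pairs inside U
    have hk1 : 1 ≤ k := by
      rcases Nat.eq_zero_or_pos k with h0 | h; swap; · exact h
      exfalso
      rw [h0] at hk
      have : V = ⊥ := Submodule.finrank_eq_zero.mp hk
      rw [this, Submodule.mem_bot] at haV
      exact ha haV
    obtain ⟨k', rfl⟩ : ∃ k', k = k' + 1 := ⟨k - 1, (Nat.succ_pred_eq_of_pos hk1).symm⟩
    obtain ⟨i, hi⟩ : ∃ i, a i ≠ 0 := by
      by_contra h; push_neg at h; exact ha (funext h)
    set T := U.filter (fun x => x i = 0) with hT
    have hmemU : ∀ x ∈ U, x + a ∈ U := by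
      intro x hx
      rw [hU, Finset.mem_filter] at hx ⊢
      refine ⟨Finset.mem_univ _, ?_⟩
      have h : x + a - x0 = (x - x0) + a := by abel
      rw [h]
      exact V.add_mem hx.2 haV
    have hflip0 : ∀ x : Fin n → ZMod 2, x i = 0 → (x + a) i ≠ 0 := by
      intro x hx
      simp only [Pi.add_apply, hx, zero_add]
      exact hi
    have hflip1 : ∀ x : Fin n → ZMod 2, x i ≠ 0 → (x + a) i = 0 := by
      intro x hx
      have : ∀ v w : ZMod 2, v ≠ 0 → w ≠ 0 → v + w = 0 := by decide
      exact this _ _ hx hi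
    have hxaa : ∀ x : Fin n → ZMod 2, x + a + a = x := by
      intro x; rw [add_assoc, pi_add_self, add_zero]
    -- sum over U splits
    have hsplit : ∀ F : (Fin n → ZMod 2) → ZMod 2,
        ∑ x ∈ U, chi (F x + F (x + a)) = 2 * ∑ x ∈ T, chi (F x + F (x + a)) := by
      intro F
      have hU2 : U = T ∪ U.filter (fun x => ¬ x i = 0) :=
        (Finset.filter_union_filter_not_eq (fun x => x i = 0) U).symm
      have hdisj : Disjoint T (U.filter (fun x => ¬ x i = 0)) :=
        Finset.disjoint_filter_filter_not U U (fun x => x i = 0)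
      rw [hU2, Finset.sum_union hdisj]
      have hTT' : ∑ x ∈ U.filter (fun x => ¬ x i = 0), chi (F x + F (x + a))
          = ∑ x ∈ T, chi (F x + F (x + a)) := by
        refine Finset.sum_bij' (fun x _ => x + a) (fun x _ => x + a) ?_ ?_ ?_ ?_ ?_
        · intro x hx
          have hx' := Finset.mem_filter.mp hx
          exact Finset.mem_filter.mpr ⟨hmemU x hx'.1, hflip1 x hx'.2⟩
        · intro x hx
          have hx' := Finset.mem_filter.mp hx
          exact Finset.mem_filter.mpr ⟨hmemU x hx'.1, hflip0 x hx'.2⟩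
        · intro x _; exact hxaa x
        · intro x _; exact hxaa x
        · intro x _
          rw [hxaa x, add_comm (F (x + a)) (F x)]
      rw [hTT']
      ring
    -- card T
    have hcardT : T.card = 2 ^ k' := by
      have h1 : T.card + (U.filter (fun x => ¬ x i = 0)).card = U.card := by
        have := Finset.card_filter_add_card_filter_not
          (p := fun x : Fin n → ZMod 2 => x i = 0) (s := U)
        simpa using this
      have h2 : (U.filter (fun x => ¬ x i = 0)).card = T.card := by
        refine Finset.card_bij' (fun x _ => x + a) (fun x _ => x + a) ?_ ?_ ?_ ?_
        · intro x hx
          have hx' := Finset.mem_filter.mp hx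
          exact Finset.mem_filter.mpr ⟨hmemU x hx'.1, hflip1 x hx'.2⟩
        · intro x hx
          have hx' := Finset.mem_filter.mp hx
          exact Finset.mem_filter.mpr ⟨hmemU x hx'.1, hflip0 x hx'.2⟩
        · intro x _; exact hxaa x
        · intro x _; exact hxaa x
      rw [h2] at h1
      rw [hcardU] at h1
      rw [pow_succ] at h1
      have h5 : 2 * T.card = 2 * 2 ^ k' := by rw [two_mul, h1, mul_comm]
      exact Nat.eq_of_mul_eq_mul_left (by norm_num) h5
    -- surjectivity of dirMap onto T
    have hsurj : Function.Surjective (dirMap n a T) := by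
      intro s
      refine ⟨fun z => if h : z - a ∈ T then s ⟨z - a, h⟩ else 0, ?_⟩
      funext x
      have hxT : (x : Fin n → ZMod 2) ∈ T := x.2
      have hxi : ((x : Fin n → ZMod 2)) i = 0 := (Finset.mem_filter.mp hxT).2
      have h1 : ¬ ((x : Fin n → ZMod 2) - a ∈ T) := by
        intro hmem
        have hcontra := (Finset.mem_filter.mp hmem).2
        have hsubeq : (x : Fin n → ZMod 2) - a = (x : Fin n → ZMod 2) + a := by
          rw [sub_eq_add_neg, pi_neg_self]
        rw [hsubeq] at hcontra
        exact hflip0 _ hxi hcontra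
      have h2 : (x : Fin n → ZMod 2) + a - a = (x : Fin n → ZMod 2) := by abel
      show (if h : (x : Fin n → ZMod 2) - a ∈ T then s ⟨(x : Fin n → ZMod 2) - a, h⟩ else 0)
          + (if h : (x : Fin n → ZMod 2) + a - a ∈ T
              then s ⟨(x : Fin n → ZMod 2) + a - a, h⟩ else 0) = s x
      rw [dif_neg h1, zero_add]
      have haux : ∀ (z : Fin n → ZMod 2), z = (x : Fin n → ZMod 2) →
          (if h : z ∈ T then s ⟨z, h⟩ else 0) = s x := by
        rintro z rfl
        rw [dif_pos hxT]
      exact haux _ h2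
    -- predicate rewriting
    have hpred : ∀ F : (Fin n → ZMod 2) → ZMod 2,
        (ε * 2 ^ (k' + 1) ≤ |∑ x ∈ U, chi (F x + F (x + a))|) ↔
        (ε * 2 ^ k' ≤ |∑ x : ↥T, chi ((dirMap n a T) F x)|) := by
      intro F
      have h1 : ∑ x : ↥T, chi ((dirMap n a T) F x) = ∑ x ∈ T, chi (F x + F (x + a)) := by
        rw [Finset.univ_eq_attach]
        exact Finset.sum_attach T (fun z => chi (F z + F (z + a)))
      rw [hsplit F, h1, abs_mul, abs_two]
      rw [pow_succ]
      constructor <;> intro h <;> nlinarith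
    have hfilter : (Finset.univ.filter fun F : (Fin n → ZMod 2) → ZMod 2 =>
        ε * 2 ^ (k' + 1) ≤ |∑ x ∈ U, chi (F x + F (x + a))|) =
        (Finset.univ.filter fun F : (Fin n → ZMod 2) → ZMod 2 =>
        ε * 2 ^ k' ≤ |∑ x : ↥T, chi ((dirMap n a T) F x)|) := by
      apply Finset.filter_congr
      intro F _
      exact hpred F
    rw [hfilter]
    have hbound := count_via_map (dirMap n a T) hsurj (ε * 2 ^ k') (by positivity)
    rw [hcardA, Fintype.card_coe, hcardT] at hbound
    push_cast at hbound
    refine le_trans hbound ?_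
    have hexp : -(ε * 2 ^ k') ^ 2 / (2 * (2:ℝ) ^ k') ≤ -(ε ^ 2 * 2 ^ (k' + 1)) / 8 := by
      rw [div_le_div_iff₀ (by positivity) (by norm_num), pow_succ]
      ring_nf
      nlinarith [mul_nonneg (sq_nonneg ε)
        (pow_nonneg (show (0:ℝ) ≤ 2 by norm_num) (k' * 2))]
    exact mul_le_mul_of_nonneg_left (Real.exp_le_exp.2 hexp) (by positivity)
  · -- a ∉ V : U and U + a disjoint
    have hsurj : Function.Surjective (dirMap n a U) := by
      intro s
      refine ⟨fun z => if h : z ∈ U then s ⟨z, h⟩ else 0, ?_⟩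
      funext x
      have hxU : (x : Fin n → ZMod 2) ∈ U := x.2
      have h1 : ¬ ((x : Fin n → ZMod 2) + a ∈ U) := by
        intro hmem
        have hm2 := (Finset.mem_filter.mp hmem).2
        have hx2 := (Finset.mem_filter.mp hxU).2
        have heq : a = ((x : Fin n → ZMod 2) + a - x0) - ((x : Fin n → ZMod 2) - x0) := by abel
        exact haV (heq ▸ V.sub_mem hm2 hx2)
      show (if h : (x : Fin n → ZMod 2) ∈ U then s ⟨(x : Fin n → ZMod 2), h⟩ else 0)
          + (if h : (x : Fin n → ZMod 2) + a ∈ U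
              then s ⟨(x : Fin n → ZMod 2) + a, h⟩ else 0) = s x
      rw [dif_pos hxU, dif_neg h1, add_zero]
    have hpred : ∀ F : (Fin n → ZMod 2) → ZMod 2,
        (ε * 2 ^ k ≤ |∑ x ∈ U, chi (F x + F (x + a))|) ↔
        (ε * 2 ^ k ≤ |∑ x : ↥U, chi ((dirMap n a U) F x)|) := by
      intro F
      have h1 : ∑ x : ↥U, chi ((dirMap n a U) F x) = ∑ x ∈ U, chi (F x + F (x + a)) := by
        rw [Finset.univ_eq_attach]
        exact Finset.sum_attach U (fun z => chi (F z + F (z + a)))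
      rw [h1]
    have hfilter : (Finset.univ.filter fun F : (Fin n → ZMod 2) → ZMod 2 =>
        ε * 2 ^ k ≤ |∑ x ∈ U, chi (F x + F (x + a))|) =
        (Finset.univ.filter fun F : (Fin n → ZMod 2) → ZMod 2 =>
        ε * 2 ^ k ≤ |∑ x : ↥U, chi ((dirMap n a U) F x)|) := by
      apply Finset.filter_congr
      intro F _
      exact hpred F
    rw [hfilter]
    have hbound := count_via_map (dirMap n a U) hsurj (ε * 2 ^ k) (by positivity)
    rw [hcardA, Fintype.card_coe, hcardU] at hbound
    push_cast at hbound
    refine le_trans hbound ?_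
    have hexp : -(ε * 2 ^ k) ^ 2 / (2 * (2:ℝ) ^ k) ≤ -(ε ^ 2 * 2 ^ k) / 8 := by
      rw [div_le_div_iff₀ (by positivity) (by norm_num)]
      ring_nf
      nlinarith [mul_nonneg (sq_nonneg ε)
        (pow_nonneg (show (0:ℝ) ≤ 2 by norm_num) (k * 2))]
    exact mul_le_mul_of_nonneg_left (Real.exp_le_exp.2 hexp) (by positivity)




lemma exists_span_tuple {n k : ℕ} (V : Submodule (ZMod 2) (Fin n → ZMod 2))
    (hk : Module.finrank (ZMod 2) V = k) :
    ∃ b : Fin k → (Fin n → ZMod 2), Submodule.span (ZMod 2) (Set.range b) = V := by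
  let B : Module.Basis (Fin k) (ZMod 2) V := Module.finBasisOfFinrankEq (ZMod 2) V hk
  refine ⟨fun j => (B j : Fin n → ZMod 2), ?_⟩
  have h1 : Set.range (fun j => (B j : Fin n → ZMod 2)) = V.subtype '' (Set.range B) := by
    rw [← Set.range_comp]; rfl
  rw [h1, Submodule.span_image, B.span_eq, Submodule.map_top, Submodule.range_subtype]

lemma arith (n k : ℕ) (ε : ℝ) (hε : 0 < ε) (hε1 : ε < 1) (hn : 2 ^ 16 < n)
    (hkdef : k = ⌈Real.logb 2 ((n : ℝ) / ε ^ 2) +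
        Real.logb 2 (Real.logb 2 ((n : ℝ) / ε ^ 2))⌉₊ + 16) :
    ((n * k + 2 * n + 1 : ℕ) : ℝ) * Real.log 2 < ε ^ 2 * 2 ^ k / 8 := by
  have hn1 : (65536 : ℝ) < n := by exact_mod_cast hn
  have hnpos : (0:ℝ) < n := by linarith
  set N : ℝ := (n : ℝ) / ε ^ 2 with hN
  have hNpos : 0 < N := by positivity
  have hNn : (n : ℝ) ≤ N := by
    rw [hN, le_div_iff₀ (by positivity)]
    nlinarith [mul_le_mul_of_nonneg_left (show ε ^ 2 ≤ 1 by nlinarith) hnpos.le]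
  set L := Real.logb 2 N with hL
  have hL16 : 16 < L := by
    have h2 : Real.logb 2 65536 < Real.logb 2 N :=
      Real.logb_lt_logb (by norm_num) (by norm_num) (by linarith)
    have h3 : Real.logb 2 65536 = 16 := by
      rw [show (65536:ℝ) = (2:ℝ) ^ (16:ℝ) by norm_num,
        Real.logb_rpow (by norm_num) (by norm_num)]
    linarith
  have hLpos : 0 < L := by linarith
  have hlogL : Real.logb 2 L ≤ 2 * L := by
    rw [Real.logb, div_le_iff₀ (Real.log_pos (by norm_num))]
    have h1 : Real.log L ≤ L - 1 := Real.log_le_sub_one_of_pos hLpos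
    nlinarith [Real.log_two_gt_d9]
  have hlogLpos : 0 ≤ Real.logb 2 L := Real.logb_nonneg (by norm_num) (by linarith)
  set x := L + Real.logb 2 L with hx
  have hxpos : 0 ≤ x := by positivity
  have hkl : x + 16 ≤ (k : ℝ) := by
    rw [hkdef]; push_cast
    have := Nat.le_ceil x
    linarith
  have hku : (k : ℝ) ≤ 3 * L + 17 := by
    rw [hkdef]; push_cast
    have h2 := Nat.ceil_lt_add_one hxpos
    linarith
  have hpow : (N * L) * 65536 ≤ (2:ℝ) ^ k := by
    have h1 : (2:ℝ) ^ (k:ℕ) = (2:ℝ) ^ ((k:ℕ):ℝ) := (Real.rpow_natCast 2 k).symm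
    rw [h1]
    have h2 : (2:ℝ) ^ (x + 16 : ℝ) ≤ (2:ℝ) ^ ((k:ℕ):ℝ) :=
      Real.rpow_le_rpow_of_exponent_le (by norm_num) hkl
    refine le_trans (le_of_eq ?_) h2
    rw [hx, show (L + Real.logb 2 L + 16 : ℝ) = L + (Real.logb 2 L + (16:ℝ)) from by ring,
      Real.rpow_add (by norm_num), Real.rpow_add (by norm_num), hL,
      Real.rpow_logb (by norm_num) (by norm_num) hNpos,
      Real.rpow_logb (by norm_num) (by norm_num) hLpos,
      show ((2:ℝ) ^ (16:ℝ)) = 65536 from by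
        rw [show (16:ℝ) = ((16:ℕ):ℝ) from by norm_num, Real.rpow_natCast]; norm_num]
    ring
  have hE : 8192 * ((n:ℝ) * L) ≤ ε ^ 2 * 2 ^ k / 8 := by
    have h0 : ε ^ 2 * (N * L * 65536) = (n:ℝ) * L * 65536 := by
      rw [hN]; field_simp
    have h1 : ε ^ 2 * (N * L * 65536) ≤ ε ^ 2 * 2 ^ k :=
      mul_le_mul_of_nonneg_left hpow (sq_nonneg ε)
    rw [h0] at h1
    linarith
  have hlog2 : Real.log 2 < 1 := by
    have := Real.log_two_lt_d9; linarith
  have hlog2pos : 0 < Real.log 2 := Real.log_pos (by norm_num)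
  have hknn : (0:ℝ) ≤ (k:ℝ) := Nat.cast_nonneg k
  have hk5 : (k : ℝ) ≤ 5 * L := by linarith
  have h16 : 16 * (n:ℝ) < (n:ℝ) * L := by nlinarith
  push_cast
  have hLHS : ((n:ℝ) * k + 2 * n + 1) * Real.log 2 < 6 * ((n:ℝ) * L) := by
    have h1 : (n:ℝ) * k ≤ 5 * ((n:ℝ) * L) := by nlinarith
    have hA : (0:ℝ) ≤ (n:ℝ) * k + 2 * n + 1 := by positivity
    have h2 : ((n:ℝ) * k + 2 * n + 1) * Real.log 2 ≤ ((n:ℝ) * k + 2 * n + 1) := by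
      nlinarith [mul_le_mul_of_nonneg_left (le_of_lt hlog2) hA]
    nlinarith
  nlinarith




open Module in
open scoped Classical in
theorem stmt_16 :
    ∃ (n0 c : ℕ), ∀ ε : ℝ, 0 < ε → ∀ n : ℕ, n0 < n →
      ∀ k : ℕ,
        k = ⌈Real.logb 2 ((n : ℝ) / ε ^ 2) +
              Real.logb 2 (Real.logb 2 ((n : ℝ) / ε ^ 2))⌉₊ + c →
        ∃ F : (Fin n → ZMod 2) → ZMod 2,
          ∀ (V : Submodule (ZMod 2) (Fin n → ZMod 2)) (x0 : Fin n → ZMod 2),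
            finrank (ZMod 2) V = k →
            ∀ a : Fin n → ZMod 2, a ≠ 0 →
              |(1 / 2 ^ k : ℝ) *
                  ∑ x ∈ Finset.univ.filter (fun x : Fin n → ZMod 2 => x - x0 ∈ V),
                    (if F x + F (x + a) = 0 then (1 : ℝ) else -1)| ≤ ε := by
  refine ⟨2 ^ 16, 16, ?_⟩
  intro ε hε n hn k hkdef
  by_cases hε1 : 1 ≤ ε
  · -- trivial case : any F works since the normalized sum is at most 1
    refine ⟨fun _ => 0, ?_⟩
    intro V x0 hk a ha
    set F : (Fin n → ZMod 2) → ZMod 2 := fun _ => 0 with hF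
    have hcard := card_coset n k V x0 hk
    have h1 : |∑ x ∈ Finset.univ.filter (fun x : Fin n → ZMod 2 => x - x0 ∈ V),
        (if F x + F (x + a) = 0 then (1 : ℝ) else -1)| ≤ 2 ^ k := by
      calc |∑ x ∈ Finset.univ.filter (fun x : Fin n → ZMod 2 => x - x0 ∈ V),
          (if F x + F (x + a) = 0 then (1 : ℝ) else -1)|
          ≤ ∑ x ∈ Finset.univ.filter (fun x : Fin n → ZMod 2 => x - x0 ∈ V),
            |if F x + F (x + a) = 0 then (1 : ℝ) else -1| := Finset.abs_sum_le_sum_abs _ _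
        _ ≤ ∑ _x ∈ Finset.univ.filter (fun x : Fin n → ZMod 2 => x - x0 ∈ V), (1:ℝ) :=
            Finset.sum_le_sum (fun x _ => by split <;> norm_num)
        _ = ((Finset.univ.filter (fun x : Fin n → ZMod 2 => x - x0 ∈ V)).card : ℝ) := by
            rw [Finset.sum_const, nsmul_eq_mul, mul_one]
        _ = 2 ^ k := by rw [hcard]; push_cast; ring
    rw [abs_mul, abs_of_pos (show (0:ℝ) < 1 / 2 ^ k by positivity)]
    calc (1 / 2 ^ k : ℝ) * |∑ x ∈ Finset.univ.filter (fun x : Fin n → ZMod 2 => x - x0 ∈ V),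
          (if F x + F (x + a) = 0 then (1 : ℝ) else -1)|
        ≤ (1 / 2 ^ k : ℝ) * 2 ^ k := mul_le_mul_of_nonneg_left h1 (by positivity)
      _ = 1 := by field_simp
      _ ≤ ε := hε1
  · push_neg at hε1
    by_contra hcon
    push_neg at hcon
    set E := Real.exp (-(ε ^ 2 * 2 ^ k) / 8) with hEdef
    set Bad : ((Fin k → Fin n → ZMod 2) × (Fin n → ZMod 2) × (Fin n → ZMod 2)) →
        Finset ((Fin n → ZMod 2) → ZMod 2) := fun p =>
      Finset.univ.filter fun F : (Fin n → ZMod 2) → ZMod 2 =>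
        finrank (ZMod 2) (Submodule.span (ZMod 2) (Set.range p.1)) = k ∧ p.2.2 ≠ 0 ∧
        ε * 2 ^ k ≤ |∑ x ∈ Finset.univ.filter
            (fun x => x - p.2.1 ∈ Submodule.span (ZMod 2) (Set.range p.1)),
          chi (F x + F (x + p.2.2))| with hBad
    have key : ∀ p, ((Bad p).card : ℝ) ≤ 2 ^ (2 ^ n) * 2 * E := by
      intro p
      by_cases hcond : finrank (ZMod 2) (Submodule.span (ZMod 2) (Set.range p.1)) = k ∧
          p.2.2 ≠ 0
      · refine le_trans ?_ (per_triple n k ε hε _ p.2.1 p.2.2 hcond.1 hcond.2)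
        have hsub2 : Bad p ⊆ Finset.univ.filter fun F : (Fin n → ZMod 2) → ZMod 2 =>
            ε * 2 ^ k ≤ |∑ x ∈ Finset.univ.filter
              (fun x => x - p.2.1 ∈ Submodule.span (ZMod 2) (Set.range p.1)),
              chi (F x + F (x + p.2.2))| := by
          intro F hF
          exact Finset.mem_filter.2 ⟨Finset.mem_univ _, (Finset.mem_filter.mp hF).2.2.2⟩
        exact_mod_cast Finset.card_le_card hsub2
      · have hempty : Bad p = ∅ := by
          rw [hBad]
          apply Finset.filter_false_of_mem
          intro F _
          intro hh
          exact hcond ⟨hh.1, hh.2.1⟩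
        rw [hempty]
        simp only [Finset.card_empty, Nat.cast_zero]
        positivity
    have hsub : (Finset.univ : Finset ((Fin n → ZMod 2) → ZMod 2)) ⊆
        Finset.univ.biUnion (fun p => Bad p) := by
      intro F _
      obtain ⟨V, x0, hrk, a, ha, hlt⟩ := hcon F
      obtain ⟨b, hb⟩ := exists_span_tuple V hrk
      refine Finset.mem_biUnion.2 ⟨(b, x0, a), Finset.mem_univ _, ?_⟩
      rw [hBad]
      refine Finset.mem_filter.2 ⟨Finset.mem_univ _, ?_, ha, ?_⟩
      · show finrank (ZMod 2) (Submodule.span (ZMod 2) (Set.range b)) = k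
        rw [hb]; exact hrk
      · show ε * 2 ^ k ≤ |∑ x ∈ Finset.univ.filter
            (fun x => x - x0 ∈ Submodule.span (ZMod 2) (Set.range b)),
          chi (F x + F (x + a))|
        have hsame : ∑ x ∈ Finset.univ.filter
            (fun x => x - x0 ∈ Submodule.span (ZMod 2) (Set.range b)),
            chi (F x + F (x + a)) =
            ∑ x ∈ Finset.univ.filter (fun x : Fin n → ZMod 2 => x - x0 ∈ V),
            (if F x + F (x + a) = 0 then (1 : ℝ) else -1) := by
          rw [hb]
          refine Finset.sum_congr rfl (fun x _ => ?_)
          unfold chi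
          congr
        rw [hsame]
        rw [abs_mul, abs_of_pos (show (0:ℝ) < 1 / 2 ^ k by positivity)] at hlt
        have h2k : (0:ℝ) < 2 ^ k := by positivity
        rw [show (1 / 2 ^ k : ℝ) * |∑ x ∈ Finset.univ.filter
              (fun x : Fin n → ZMod 2 => x - x0 ∈ V),
              (if F x + F (x + a) = 0 then (1 : ℝ) else -1)| =
            |∑ x ∈ Finset.univ.filter (fun x : Fin n → ZMod 2 => x - x0 ∈ V),
              (if F x + F (x + a) = 0 then (1 : ℝ) else -1)| / 2 ^ k from by ring] at hlt
        exact le_of_lt ((lt_div_iff₀ h2k).mp hlt)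
    -- counting
    have h1 : ((Finset.univ : Finset ((Fin n → ZMod 2) → ZMod 2)).card : ℝ) ≤
        (Fintype.card ((Fin k → Fin n → ZMod 2) × (Fin n → ZMod 2) × (Fin n → ZMod 2)) : ℝ) *
          (2 ^ (2 ^ n) * 2 * E) := by
      calc ((Finset.univ : Finset ((Fin n → ZMod 2) → ZMod 2)).card : ℝ)
          ≤ ((Finset.univ.biUnion (fun p => Bad p)).card : ℝ) := by
            exact_mod_cast Finset.card_le_card hsub
        _ ≤ ∑ p : (Fin k → Fin n → ZMod 2) × (Fin n → ZMod 2) × (Fin n → ZMod 2),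
              ((Bad p).card : ℝ) := by
            exact_mod_cast Finset.card_biUnion_le
        _ ≤ ∑ _p : (Fin k → Fin n → ZMod 2) × (Fin n → ZMod 2) × (Fin n → ZMod 2),
              (2 ^ (2 ^ n) * 2 * E) := Finset.sum_le_sum (fun p _ => key p)
        _ = _ := by rw [Finset.sum_const, nsmul_eq_mul, Finset.card_univ]
    have hcardFF : ((Finset.univ : Finset ((Fin n → ZMod 2) → ZMod 2)).card : ℝ)
        = 2 ^ (2 ^ n) := by
      rw [Finset.card_univ]
      have : Fintype.card ((Fin n → ZMod 2) → ZMod 2) = 2 ^ (2 ^ n) := by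
        simp [Fintype.card_fun, ZMod.card]
      rw [this]
      push_cast
      ring
    have hcardP : (Fintype.card ((Fin k → Fin n → ZMod 2) × (Fin n → ZMod 2) ×
        (Fin n → ZMod 2)) : ℝ) = 2 ^ (n * k + 2 * n) := by
      have hP : Fintype.card ((Fin k → Fin n → ZMod 2) × (Fin n → ZMod 2) × (Fin n → ZMod 2))
          = 2 ^ (n * k + 2 * n) := by
        simp [Fintype.card_prod, Fintype.card_fun, ZMod.card, ← pow_mul, ← pow_add]
        ring
      rw [hP]
      push_cast
      ring
    have hstrict : (Fintype.card ((Fin k → Fin n → ZMod 2) × (Fin n → ZMod 2) ×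
        (Fin n → ZMod 2)) : ℝ) * (2 ^ (2 ^ n) * 2 * E) < 2 ^ (2 ^ n) := by
      rw [hcardP, hEdef]
      have harith := arith n k ε hε hε1 hn hkdef
      have hC : (0:ℝ) < 2 ^ (2 ^ n) := by positivity
      rw [show ((2:ℝ) ^ (n * k + 2 * n)) * (2 ^ (2 ^ n) * 2 * Real.exp (-(ε ^ 2 * 2 ^ k) / 8))
          = 2 ^ (2 ^ n) * (2 ^ (n * k + 2 * n + 1) * Real.exp (-(ε ^ 2 * 2 ^ k) / 8)) from by
        rw [pow_succ]; ring]
      nth_rewrite 2 [show ((2:ℝ) ^ (2 ^ n)) = 2 ^ (2 ^ n) * 1 from by ring]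
      apply mul_lt_mul_of_pos_left ?_ hC
      rw [← Real.exp_log (show (0:ℝ) < 2 ^ (n * k + 2 * n + 1) by positivity), ← Real.exp_add]
      have hlogeq : Real.log ((2:ℝ) ^ (n * k + 2 * n + 1)) =
          ((n * k + 2 * n + 1 : ℕ) : ℝ) * Real.log 2 := by
        rw [Real.log_pow]
      rw [hlogeq]
      have hneg : ((n * k + 2 * n + 1 : ℕ) : ℝ) * Real.log 2 + (-(ε ^ 2 * 2 ^ k) / 8) < 0 := by
        have : ((n * k + 2 * n + 1 : ℕ) : ℝ) * Real.log 2 < ε ^ 2 * 2 ^ k / 8 := harith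
        linarith
      calc Real.exp (((n * k + 2 * n + 1 : ℕ) : ℝ) * Real.log 2 + -(ε ^ 2 * 2 ^ k) / 8)
          < Real.exp 0 := Real.exp_lt_exp.2 (by linarith)
        _ = 1 := Real.exp_zero
    rw [hcardFF] at h1
    linarith
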